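/- Let A be a nonzero special 2×2 real matrix (a scalar multiple of an orthogonal matrix), and let B be a nonzero 2×2 real matrix that is not a scalar multiple of A. Then the set of points (θ,φ) ∈ Z_A at which ψ_B(θ,φ) − ((∂ψ_A/∂θ)(θ,φ))² + ((∂ψ_A/∂φ)(θ,φ))² ≠ 0 is open and dense in Z_A (with the subspace topology from ℝ²). -/

import Mathlib

open Real Matrix

/-- The function `ψ_A` on the torus associated with a `2 × 2` matrix `A`. -/
noncomputable def psiFun (A : Matrix (Fin 2) (Fin 2) ℝ) (θ φ : ℝ) : ℝ :=
  A 0 0 * Real.cos θ * Real.cos φ + A 0 1 * Real.cos θ * Real.sin φ +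
    A 1 0 * Real.sin θ * Real.cos φ + A 1 1 * Real.sin θ * Real.sin φ

/-- The quantity `ψ_B − (∂ψ_A/∂θ)² + (∂ψ_A/∂φ)²` evaluated at `p = (θ,φ)`. -/
noncomputable def secondDerivQuantity (A B : Matrix (Fin 2) (Fin 2) ℝ) (p : ℝ × ℝ) : ℝ :=
  psiFun B p.1 p.2 - (deriv (fun θ' => psiFun A θ' p.2) p.1) ^ 2
    + (deriv (fun φ' => psiFun A p.1 φ') p.2) ^ 2

private lemma psi_deriv_theta (A : Matrix (Fin 2) (Fin 2) ℝ) (θ φ : ℝ) :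
    deriv (fun θ' => psiFun A θ' φ) θ =
      A 1 0 * Real.cos θ * Real.cos φ + A 1 1 * Real.cos θ * Real.sin φ
        - A 0 0 * Real.sin θ * Real.cos φ - A 0 1 * Real.sin θ * Real.sin φ := by
  have h1 := ((Real.hasDerivAt_cos θ).const_mul (A 0 0)).mul_const (Real.cos φ)
  have h2 := ((Real.hasDerivAt_cos θ).const_mul (A 0 1)).mul_const (Real.sin φ)
  have h3 := ((Real.hasDerivAt_sin θ).const_mul (A 1 0)).mul_const (Real.cos φ)
  have h4 := ((Real.hasDerivAt_sin θ).const_mul (A 1 1)).mul_const (Real.sin φ)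
  have H := ((h1.add h2).add h3).add h4
  simp only [psiFun]
  refine H.deriv.trans ?_; ring

private lemma psi_deriv_phi (A : Matrix (Fin 2) (Fin 2) ℝ) (θ φ : ℝ) :
    deriv (fun φ' => psiFun A θ φ') φ =
      A 0 1 * Real.cos θ * Real.cos φ - A 0 0 * Real.cos θ * Real.sin φ
        + A 1 1 * Real.sin θ * Real.cos φ - A 1 0 * Real.sin θ * Real.sin φ := by
  have h1 := (Real.hasDerivAt_cos φ).const_mul (A 0 0 * Real.cos θ)
  have h2 := (Real.hasDerivAt_sin φ).const_mul (A 0 1 * Real.cos θ)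
  have h3 := (Real.hasDerivAt_cos φ).const_mul (A 1 0 * Real.sin θ)
  have h4 := (Real.hasDerivAt_sin φ).const_mul (A 1 1 * Real.sin θ)
  have H := ((h1.add h2).add h3).add h4
  simp only [psiFun]
  refine H.deriv.trans ?_; ring

private lemma cos2_hasDeriv (x : ℝ) :
    HasDerivAt (fun s : ℝ => Real.cos (2*s)) (-Real.sin (2*x) * 2) x := by
  have h : HasDerivAt (fun s : ℝ => 2*s) 2 x := by
    simpa using (hasDerivAt_id x).const_mul (2:ℝ)
  exact h.cos

private lemma sin2_hasDeriv (x : ℝ) :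
    HasDerivAt (fun s : ℝ => Real.sin (2*s)) (Real.cos (2*x) * 2) x := by
  have h : HasDerivAt (fun s : ℝ => 2*s) 2 x := by
    simpa using (hasDerivAt_id x).const_mul (2:ℝ)
  exact h.sin

private lemma trig_deriv (α β γ : ℝ) :
    deriv (fun s => α + β * Real.cos (2*s) + γ * Real.sin (2*s))
      = fun x => β * (-Real.sin (2*x) * 2) + γ * (Real.cos (2*x) * 2) := by
  funext x
  have H := ((hasDerivAt_const x α).add ((cos2_hasDeriv x).const_mul β)).add
    ((sin2_hasDeriv x).const_mul γ)
  refine H.deriv.trans ?_; ring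

private lemma trig_vanish (α β γ : ℝ)
    (hEq : (fun s => α + β * Real.cos (2*s) + γ * Real.sin (2*s)) =ᶠ[nhds (0:ℝ)] (fun _ => 0)) :
    α = 0 ∧ β = 0 ∧ γ = 0 := by
  have h0 : α + β = 0 := by
    have h := hEq.eq_of_nhds
    simpa using h
  have hd := hEq.deriv
  rw [trig_deriv] at hd
  have hγ : γ = 0 := by
    have h := hd.eq_of_nhds
    simpa using h
  have hd2 := hd.deriv
  have hβ : β = 0 := by
    have h := hd2.eq_of_nhds
    have H := (((sin2_hasDeriv 0).neg.mul_const 2).const_mul β).add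
      (((cos2_hasDeriv 0).mul_const 2).const_mul γ)
    have hfun : (fun x : ℝ => β * (-Real.sin (2*x) * 2) + γ * (Real.cos (2*x) * 2))
        = (fun x : ℝ => β * (-Real.sin (2*x) * 2) + γ * (Real.cos (2*x) * 2)) := rfl
    rw [show deriv (fun x : ℝ => β * (-Real.sin (2*x) * 2) + γ * (Real.cos (2*x) * 2)) 0 = _ from H.deriv] at h
    simp at h
    nlinarith [h]
  refine ⟨by linarith, hβ, hγ⟩

private lemma colinear_core (a b ε p q r w θ φ : ℝ)
    (heps : ε ^ 2 = 1)
    (hA0 : a * (Real.cos θ * Real.cos φ + ε * (Real.sin θ * Real.sin φ)) + b * (Real.cos θ * Real.sin φ - ε * (Real.sin θ * Real.cos φ)) = 0)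
    (hE1 : (p + ε * w) * (Real.cos θ * Real.cos φ + ε * (Real.sin θ * Real.sin φ)) + (q - ε * r) * (Real.cos θ * Real.sin φ - ε * (Real.sin θ * Real.cos φ)) = 0)
    (hE2 : (p - ε * w) * (Real.cos θ * Real.cos φ - ε * (Real.sin θ * Real.sin φ)) + (q + ε * r) * (Real.cos θ * Real.sin φ + ε * (Real.sin θ * Real.cos φ)) = 0)
    (hE3 : (q * ε + r) * (Real.cos θ * Real.cos φ - ε * (Real.sin θ * Real.sin φ)) + (w - p * ε) * (Real.cos θ * Real.sin φ + ε * (Real.sin θ * Real.cos φ)) = 0) :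
    p - ε * w = 0 ∧ q + ε * r = 0 ∧ p * b - q * a = 0 := by
  have hT : (q + ε * r) * (Real.cos θ * Real.cos φ - ε * (Real.sin θ * Real.sin φ)) - (p - ε * w) * (Real.cos θ * Real.sin φ + ε * (Real.sin θ * Real.cos φ)) = 0 := by
    linear_combination ε * hE3 + ((-1*q*Real.cos θ*Real.cos φ + p*Real.cos θ*Real.sin φ + ε*q*Real.sin θ*Real.sin φ + ε*p*Real.sin θ*Real.cos φ) * heps)
  have hm : p - ε * w = 0 := by
    linear_combination (Real.cos θ * Real.cos φ - ε * (Real.sin θ * Real.sin φ)) * hE2 - (Real.cos θ * Real.sin φ + ε * (Real.sin θ * Real.cos φ)) * hT + (-1*p*Real.sin θ^2*Real.sin φ^2 + -1*p*Real.sin θ^2*Real.cos φ^2 + ε*w*Real.sin θ^2*Real.sin φ^2 + ε*w*Real.sin θ^2*Real.cos φ^2) * heps + (-1*p*Real.sin φ^2 + -1*p*Real.cos φ^2 + ε*w*Real.sin φ^2 + ε*w*Real.cos φ^2) * (Real.sin_sq_add_cos_sq θ) + (-1*p + ε*w) * (Real.sin_sq_add_cos_sq φ)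
  have hn : q + ε * r = 0 := by
    linear_combination (Real.cos θ * Real.sin φ + ε * (Real.sin θ * Real.cos φ)) * hE2 + (Real.cos θ * Real.cos φ - ε * (Real.sin θ * Real.sin φ)) * hT + (-1*q*Real.sin θ^2*Real.sin φ^2 + -1*q*Real.sin θ^2*Real.cos φ^2 + -1*ε*r*Real.sin θ^2*Real.sin φ^2 + -1*ε*r*Real.sin θ^2*Real.cos φ^2) * heps + (-1*q*Real.sin φ^2 + -1*q*Real.cos φ^2 + -1*ε*r*Real.sin φ^2 + -1*ε*r*Real.cos φ^2) * (Real.sin_sq_add_cos_sq θ) + (-1*q + -1*ε*r) * (Real.sin_sq_add_cos_sq φ)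
  have hp1 : p * (Real.cos θ * Real.cos φ + ε * (Real.sin θ * Real.sin φ)) + q * (Real.cos θ * Real.sin φ - ε * (Real.sin θ * Real.cos φ)) = 0 := by
    linear_combination (1/2) * hE1 + ((Real.cos θ * Real.cos φ + ε * (Real.sin θ * Real.sin φ)) / 2) * hm + ((Real.cos θ * Real.sin φ - ε * (Real.sin θ * Real.cos φ)) / 2) * hn
  have hpq : p * b - q * a = 0 := by
    linear_combination (b * (Real.cos θ * Real.cos φ + ε * (Real.sin θ * Real.sin φ)) - a * (Real.cos θ * Real.sin φ - ε * (Real.sin θ * Real.cos φ))) * hp1 - (q * (Real.cos θ * Real.cos φ + ε * (Real.sin θ * Real.sin φ)) - p * (Real.cos θ * Real.sin φ - ε * (Real.sin θ * Real.cos φ))) * hA0 + (-1*b*p*Real.sin θ^2*Real.sin φ^2 + -1*b*p*Real.sin θ^2*Real.cos φ^2 + a*q*Real.sin θ^2*Real.sin φ^2 + a*q*Real.sin θ^2*Real.cos φ^2) * heps + (-1*b*p*Real.sin φ^2 + -1*b*p*Real.cos φ^2 + a*q*Real.sin φ^2 + a*q*Real.cos φ^2) * (Real.sin_sq_add_cos_sq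 θ) + (-1*b*p + a*q) * (Real.sin_sq_add_cos_sq φ)
  exact ⟨hm, hn, hpq⟩

private lemma fourier_rep (p q r w ε θ φ : ℝ) (heps : ε ^ 2 = 1)
    (hcos : ∀ s : ℝ, Real.cos (ε * s) = Real.cos s)
    (hsin : ∀ s : ℝ, Real.sin (ε * s) = ε * Real.sin s) (s : ℝ) :
    p * Real.cos (θ + s) * Real.cos (φ + ε * s) + q * Real.cos (θ + s) * Real.sin (φ + ε * s) + r * Real.sin (θ + s) * Real.cos (φ + ε * s) + w * Real.sin (θ + s) * Real.sin (φ + ε * s)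
      = (((p + ε * w) * (Real.cos θ * Real.cos φ + ε * (Real.sin θ * Real.sin φ)) + (q - ε * r) * (Real.cos θ * Real.sin φ - ε * (Real.sin θ * Real.cos φ))) / 2) + (((p - ε * w) * (Real.cos θ * Real.cos φ - ε * (Real.sin θ * Real.sin φ)) + (q + ε * r) * (Real.cos θ * Real.sin φ + ε * (Real.sin θ * Real.cos φ))) / 2) * Real.cos (2*s) + (((q * ε + r) * (Real.cos θ * Real.cos φ - ε * (Real.sin θ * Real.sin φ)) + (w - p * ε) * (Real.cos θ * Real.sin φ + ε * (Real.sin θ * Real.cos φ))) / 2) * Real.sin (2*s) := by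
  simp only [Real.cos_add, Real.sin_add, hcos, hsin, Real.cos_two_mul, Real.sin_two_mul]
  linear_combination (ε*w*Real.cos θ*Real.cos φ + -1*ε*r*Real.cos θ*Real.sin φ + -1*ε*q*Real.sin θ*Real.cos φ + ε*p*Real.sin θ*Real.sin φ) * (Real.sin_sq_add_cos_sq s) + (-1*w*Real.sin θ*Real.sin φ*Real.cos s^2 + -1*r*Real.sin θ*Real.cos φ*Real.cos s^2 + q*Real.sin θ*Real.sin φ*Real.cos s*Real.sin s + p*Real.sin θ*Real.cos φ*Real.cos s*Real.sin s) * heps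

private lemma line_invar (a b ε θ φ : ℝ) (heps : ε ^ 2 = 1)
    (hcos : ∀ s : ℝ, Real.cos (ε * s) = Real.cos s)
    (hsin : ∀ s : ℝ, Real.sin (ε * s) = ε * Real.sin s) (s : ℝ) :
    a * Real.cos (θ + s) * Real.cos (φ + ε * s) + b * Real.cos (θ + s) * Real.sin (φ + ε * s) +
      -(ε * b) * Real.sin (θ + s) * Real.cos (φ + ε * s) +
      ε * a * Real.sin (θ + s) * Real.sin (φ + ε * s)
      = a * Real.cos θ * Real.cos φ + b * Real.cos θ * Real.sin φ +
        -(ε * b) * Real.sin θ * Real.cos φ + ε * a * Real.sin θ * Real.sin φ := by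
  simp only [Real.cos_add, Real.sin_add, hcos, hsin]
  linear_combination (-1*b*ε*Real.sin θ*Real.cos φ + b*ε^2*Real.cos θ*Real.sin φ + a*ε*Real.sin θ*Real.sin φ + a*ε^2*Real.cos θ*Real.cos φ) * (Real.sin_sq_add_cos_sq s) + (b*Real.sin θ*Real.sin φ*Real.cos s*Real.sin s + b*Real.cos θ*Real.sin φ + -1*b*Real.cos θ*Real.sin φ*Real.cos s^2 + a*Real.sin θ*Real.cos φ*Real.cos s*Real.sin s + a*Real.cos θ*Real.cos φ + -1*a*Real.cos θ*Real.cos φ*Real.cos s^2) * heps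

theorem second_derivative_nonvanishing_special
    (A : Matrix (Fin 2) (Fin 2) ℝ) (hA : A ≠ 0)
    (hA_special : ∃ c : ℝ, A * Aᵀ = c • (1 : Matrix (Fin 2) (Fin 2) ℝ))
    (B : Matrix (Fin 2) (Fin 2) ℝ) (hB : B ≠ 0)
    (hB_notColinear : ¬∃ c : ℝ, B = c • A) :
    IsOpen {q : {p : ℝ × ℝ // psiFun A p.1 p.2 = 0} | secondDerivQuantity A B q.val ≠ 0} ∧
    Dense {q : {p : ℝ × ℝ // psiFun A p.1 p.2 = 0} | secondDerivQuantity A B q.val ≠ 0} := by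
  obtain ⟨c, hc⟩ := hA_special
  have h00 : A 0 0 ^ 2 + A 0 1 ^ 2 = c := by
    have h := congrFun (congrFun hc 0) 0
    simp [Matrix.mul_apply, Fin.sum_univ_two, Matrix.one_apply] at h
    linear_combination h
  have h01 : A 0 0 * A 1 0 + A 0 1 * A 1 1 = 0 := by
    have h := congrFun (congrFun hc 0) 1
    simp [Matrix.mul_apply, Fin.sum_univ_two, Matrix.one_apply] at h
    linear_combination h
  have h11 : A 1 0 ^ 2 + A 1 1 ^ 2 = c := by
    have h := congrFun (congrFun hc 1) 1
    simp [Matrix.mul_apply, Fin.sum_univ_two, Matrix.one_apply] at h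
    linear_combination h
  have hab : A 0 0 ^ 2 + A 0 1 ^ 2 ≠ 0 := by
    intro h0
    apply hA
    have ha : A 0 0 = 0 := by nlinarith [sq_nonneg (A 0 0), sq_nonneg (A 0 1)]
    have hb : A 0 1 = 0 := by nlinarith [sq_nonneg (A 0 0), sq_nonneg (A 0 1)]
    have hc0 : A 1 0 = 0 := by nlinarith [sq_nonneg (A 1 0), sq_nonneg (A 1 1)]
    have hd0 : A 1 1 = 0 := by nlinarith [sq_nonneg (A 1 0), sq_nonneg (A 1 1)]
    ext i j
    fin_cases i <;> fin_cases j <;> simp [ha, hb, hc0, hd0]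
  set ε : ℝ := (A 0 0 * A 1 1 - A 0 1 * A 1 0) / (A 0 0 ^ 2 + A 0 1 ^ 2) with hεdef
  have hD : (A 0 0 * A 1 1 - A 0 1 * A 1 0) ^ 2 = (A 0 0 ^ 2 + A 0 1 ^ 2) ^ 2 := by
    linear_combination (-(A 0 0 * A 1 0 + A 0 1 * A 1 1)) * h01
      - (A 0 0 ^ 2 + A 0 1 ^ 2) * h00 + (A 0 0 ^ 2 + A 0 1 ^ 2) * h11
  have heps : ε ^ 2 = 1 := by
    rw [hεdef, div_pow, hD, div_self (pow_ne_zero 2 hab)]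
  have hc11 : A 1 1 = ε * A 0 0 := by
    rw [hεdef, div_mul_eq_mul_div, eq_div_iff hab]
    linear_combination A 0 1 * h01
  have hc10 : A 1 0 = -(ε * A 0 1) := by
    rw [hεdef, div_mul_eq_mul_div, ← neg_div, eq_div_iff hab]
    linear_combination A 0 0 * h01
  have hpm : ε = 1 ∨ ε = -1 := by
    have h2 : (ε - 1) * (ε + 1) = 0 := by linear_combination heps
    rcases mul_eq_zero.mp h2 with h | h
    · left; linarith
    · right; linarith
  have hsin : ∀ s : ℝ, Real.sin (ε * s) = ε * Real.sin s := by
    rcases hpm with h | h <;> intro s <;> rw [h] <;> simp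
  have hcos : ∀ s : ℝ, Real.cos (ε * s) = Real.cos s := by
    rcases hpm with h | h <;> intro s <;> rw [h] <;> simp
  have habs : |ε| = 1 := by rcases hpm with h | h <;> rw [h] <;> simp
  have hquad : ∀ pt : ℝ × ℝ, secondDerivQuantity A B pt = psiFun B pt.1 pt.2 := by
    intro pt
    unfold secondDerivQuantity
    rw [psi_deriv_theta, psi_deriv_phi, hc10, hc11]
    linear_combination (((A 0 1)^2*Real.sin pt.1^2*Real.sin pt.2^2 + -1*(A 0 1)^2*Real.cos pt.1^2*Real.cos pt.2^2 + 2*(A 0 0)*(A 0 1)*Real.sin pt.1^2*Real.cos pt.2*Real.sin pt.2 + 2*(A 0 0)*(A 0 1)*Real.cos pt.1^2*Real.cos pt.2*Real.sin pt.2 + (A 0 0)^2*Real.sin pt.1^2*Real.cos pt.2^2 + -1*(A 0 0)^2*Real.cos pt.1^2*Real.sin pt.2^2)) * heps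
  have hSeq : {q : {p : ℝ × ℝ // psiFun A p.1 p.2 = 0} | secondDerivQuantity A B q.val ≠ 0}
      = {q : {p : ℝ × ℝ // psiFun A p.1 p.2 = 0} | psiFun B q.val.1 q.val.2 ≠ 0} := by
    ext q
    simp only [Set.mem_setOf_eq, hquad q.val]
  rw [hSeq]
  constructor
  · have hcont : Continuous fun q : {p : ℝ × ℝ // psiFun A p.1 p.2 = 0} =>
        psiFun B q.val.1 q.val.2 := by
      unfold psiFun; fun_prop
    exact IsOpen.preimage hcont isOpen_ne
  · rw [Metric.dense_iff]
    rintro ⟨⟨θ, φ⟩, hq⟩ r hr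
    have hq' : psiFun A θ φ = 0 := hq
    have key : ∃ s : ℝ, |s| < r ∧ psiFun B (θ + s) (φ + ε * s) ≠ 0 := by
      by_contra hcon
      push_neg at hcon
      have hEq : (fun s => (((B 0 0 + ε * B 1 1) * (Real.cos θ * Real.cos φ + ε * (Real.sin θ * Real.sin φ)) + (B 0 1 - ε * B 1 0) * (Real.cos θ * Real.sin φ - ε * (Real.sin θ * Real.cos φ))) / 2) + (((B 0 0 - ε * B 1 1) * (Real.cos θ * Real.cos φ - ε * (Real.sin θ * Real.sin φ)) + (B 0 1 + ε * B 1 0) * (Real.cos θ * Real.sin φ + ε * (Real.sin θ * Real.cos φ))) / 2) * Real.cos (2*s) + (((B 0 1 * ε + B 1 0) * (Real.cos θ * Real.cos φ - ε * (Real.sin θ * Real.sin φ)) + (B 1 1 - B 0 0 * ε) * (Real.cos θ * Real.sin φ + ε * (Real.sin θ * Real.cos φ))) / 2) * Real.sin (2*s))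
          =ᶠ[nhds (0:ℝ)] (fun _ => 0) := by
        have hev : ∀ᶠ s : ℝ in nhds 0, |s| < r := by
          filter_upwards [Metric.ball_mem_nhds (0:ℝ) hr] with s hs
          rw [Metric.mem_ball, Real.dist_eq, sub_zero] at hs
          exact hs
        filter_upwards [hev] with s hs
        have h2 := hcon s hs
        unfold psiFun at h2
        rw [fourier_rep (B 0 0) (B 0 1) (B 1 0) (B 1 1) ε θ φ heps hcos hsin s] at h2
        exact h2
      obtain ⟨hα, hβ, hγ⟩ := trig_vanish _ _ _ hEq
      have hA0 : A 0 0 * (Real.cos θ * Real.cos φ + ε * (Real.sin θ * Real.sin φ)) + A 0 1 * (Real.cos θ * Real.sin φ - ε * (Real.sin θ * Real.cos φ)) = 0 := by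
        unfold psiFun at hq'
        rw [hc10, hc11] at hq'
        linear_combination hq'
      have hE1 : (B 0 0 + ε * B 1 1) * (Real.cos θ * Real.cos φ + ε * (Real.sin θ * Real.sin φ)) + (B 0 1 - ε * B 1 0) * (Real.cos θ * Real.sin φ - ε * (Real.sin θ * Real.cos φ)) = 0 := by
        linear_combination 2 * hα
      have hE2 : (B 0 0 - ε * B 1 1) * (Real.cos θ * Real.cos φ - ε * (Real.sin θ * Real.sin φ)) + (B 0 1 + ε * B 1 0) * (Real.cos θ * Real.sin φ + ε * (Real.sin θ * Real.cos φ)) = 0 := by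
        linear_combination 2 * hβ
      have hE3 : (B 0 1 * ε + B 1 0) * (Real.cos θ * Real.cos φ - ε * (Real.sin θ * Real.sin φ)) + (B 1 1 - B 0 0 * ε) * (Real.cos θ * Real.sin φ + ε * (Real.sin θ * Real.cos φ)) = 0 := by
        linear_combination 2 * hγ
      obtain ⟨hm, hn, hpq⟩ := colinear_core (A 0 0) (A 0 1) ε (B 0 0) (B 0 1) (B 1 0) (B 1 1)
        θ φ heps hA0 hE1 hE2 hE3
      apply hB_notColinear
      have hor : A 0 0 ≠ 0 ∨ A 0 1 ≠ 0 := by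
        by_contra hcc
        push_neg at hcc
        exact hab (by rw [hcc.1, hcc.2]; ring)
      rcases hor with ha | hb2
      · refine ⟨B 0 0 / A 0 0, ?_⟩
        ext i j
        rw [Matrix.smul_apply, smul_eq_mul]
        fin_cases i <;> fin_cases j
        · show B 0 0 = B 0 0 / A 0 0 * A 0 0
          field_simp
        · show B 0 1 = B 0 0 / A 0 0 * A 0 1
          rw [div_mul_eq_mul_div, eq_div_iff ha]
          linear_combination -hpq
        · show B 1 0 = B 0 0 / A 0 0 * A 1 0
          rw [hc10, div_mul_eq_mul_div, eq_div_iff ha]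
          linear_combination ε * hpq + A 0 0 * ε * hn - B 1 0 * A 0 0 * heps
        · show B 1 1 = B 0 0 / A 0 0 * A 1 1
          rw [hc11, div_mul_eq_mul_div, eq_div_iff ha]
          linear_combination -ε * A 0 0 * hm - A 0 0 * B 1 1 * heps
      · refine ⟨B 0 1 / A 0 1, ?_⟩
        ext i j
        rw [Matrix.smul_apply, smul_eq_mul]
        fin_cases i <;> fin_cases j
        · show B 0 0 = B 0 1 / A 0 1 * A 0 0
          rw [div_mul_eq_mul_div, eq_div_iff hb2]
          linear_combination hpq
        · show B 0 1 = B 0 1 / A 0 1 * A 0 1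
          field_simp
        · show B 1 0 = B 0 1 / A 0 1 * A 1 0
          rw [hc10, div_mul_eq_mul_div, eq_div_iff hb2]
          linear_combination ε * A 0 1 * hn - B 1 0 * A 0 1 * heps
        · show B 1 1 = B 0 1 / A 0 1 * A 1 1
          rw [hc11, div_mul_eq_mul_div, eq_div_iff hb2]
          linear_combination ε * hpq - ε * A 0 1 * hm - B 1 1 * A 0 1 * heps
    obtain ⟨s, hsr, hsB⟩ := key
    have hmem : psiFun A (θ + s) (φ + ε * s) = 0 := by
      have hinv : psiFun A (θ + s) (φ + ε * s) = psiFun A θ φ := by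
        unfold psiFun
        rw [hc10, hc11]
        exact line_invar (A 0 0) (A 0 1) ε θ φ heps hcos hsin s
      rw [hinv]; exact hq'
    refine ⟨⟨(θ + s, φ + ε * s), hmem⟩, ?_, hsB⟩
    rw [Metric.mem_ball, Subtype.dist_eq, Prod.dist_eq]
    apply max_lt
    · rw [Real.dist_eq]
      simpa using hsr
    · rw [Real.dist_eq]
      have : φ + ε * s - φ = ε * s := by ring
      rw [this, abs_mul, habs, one_mul]
      exact hsr
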